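/- Fix q ≥ 2 and α ∈ (0, π/2]. For s, t > 0 define h(α,s,t) = (t sin α)^q [ (t² + s² + 2st cos α)^{-q} + (t² + s² - 2st cos α)^{-q} ]. Then for 0 < δ < θ, ∬_{([0,θ]² ∖ [0,δ]²) ∩ {t ≤ s}} [h(α,s,t) + h(α,t,s)] dt ds = ∫_δ^θ s^{1-q} F(α) ds = F(α)·(δ^{2-q} - θ^{2-q})/(q-2) when q > 2, where F(α) = (sin α)^{1-q} [ ∫_{-cot α}^{tan(α/2)} ( (z²+1)^{-q} + ((z sin α + cos α)/(z²+1))^q ) dz + ∫_{cot α}^{cot(α/2)} ( (z²+1)^{-q} + ((z sin α - cos α)/(z²+1))^q ) dz ]. -/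

import Mathlib

open MeasureTheory Set Real

/-- The interaction density of two straight strands crossing at angle `α`,
at arclength distances `s` and `t` from the crossing. -/
noncomputable def hfun (q α s t : ℝ) : ℝ :=
  (t * sin α) ^ q *
    ((t ^ 2 + s ^ 2 + 2 * s * t * cos α) ^ (-q) +
      (t ^ 2 + s ^ 2 - 2 * s * t * cos α) ^ (-q))

/-- The angle function `F(α)` of the renormalized tangent-point energy. -/
noncomputable def Ffun (q α : ℝ) : ℝ :=
  sin α ^ (1 - q) *
    ((∫ z in (-cot α)..(tan (α / 2)),
        ((z ^ 2 + 1) ^ (-q) + ((z * sin α + cos α) / (z ^ 2 + 1)) ^ q)) +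
      (∫ z in (cot α)..(cot (α / 2)),
        ((z ^ 2 + 1) ^ (-q) + ((z * sin α - cos α) / (z ^ 2 + 1)) ^ q)))




lemma rpow_aux (b X q : ℝ) (hb : 0 < b) (hX : 0 ≤ X) :
    (X / b ^ 2) ^ (-q) = b ^ (2 * q) * X ^ (-q) := by
  rw [Real.div_rpow hX (sq_nonneg b), ← Real.rpow_natCast b 2, ← Real.rpow_mul hb.le,
      show ((2 : ℕ) : ℝ) * -q = -(2 * q) by push_cast; ring, Real.rpow_neg hb.le,
      div_eq_mul_inv, inv_inv]
  ring

lemma rpow_aux2 (b X u q : ℝ) (hb : 0 < b) (hX : 0 < X) (hu : 0 ≤ u) :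
    (u / (X / b ^ 2)) ^ q = b ^ (2 * q) * (u ^ q * X ^ (-q)) := by
  rw [div_div_eq_mul_div, Real.div_rpow (by positivity) hX.le,
      Real.mul_rpow hu (sq_nonneg b), ← Real.rpow_natCast b 2, ← Real.rpow_mul hb.le,
      show ((2 : ℕ) : ℝ) * q = 2 * q by push_cast; ring,
      Real.rpow_neg hX.le, div_eq_mul_inv]
  ring

lemma trig_ids (α : ℝ) (h0 : 0 < α) (h2 : α ≤ π/2) :
    tan (α/2) = (1 - cos α) / sin α ∧ cot (α/2) = (1 + cos α) / sin α := by
  have hs : 0 < sin (α/2) := sin_pos_of_pos_of_lt_pi (by linarith) (by nlinarith [pi_pos])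
  have hc : 0 < cos (α/2) := cos_pos_of_mem_Ioo ⟨by nlinarith [pi_pos], by nlinarith [pi_pos]⟩
  have hsa : sin α = 2 * sin (α/2) * cos (α/2) := by
    have := sin_two_mul (α/2); rwa [show 2*(α/2) = α by ring] at this
  have hca : cos α = 1 - 2 * sin (α/2)^2 := by
    have h := cos_two_mul (α/2); rw [show 2*(α/2) = α by ring] at h
    have h2 := sin_sq_add_cos_sq (α/2); nlinarith
  constructor
  · rw [tan_eq_sin_div_cos]
    field_simp [hsa, hca]; nlinarith [sin_sq_add_cos_sq (α/2)]
  · rw [Real.cot_eq_cos_div_sin]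
    field_simp [hsa, hca]; nlinarith [sin_sq_add_cos_sq (α/2)]

set_option maxHeartbeats 1000000 in
lemma Ffun_eq (q α : ℝ) (hq : 0 < q) (hα : α ∈ Ioc 0 (π / 2)) :
    Ffun q α = ∫ u in (0:ℝ)..1,
      sin α ^ q * (u ^ q + 1) *
        ((u ^ 2 + 1 + 2 * u * cos α) ^ (-q) + (u ^ 2 + 1 - 2 * u * cos α) ^ (-q)) := by
  obtain ⟨h0, h2⟩ := hα
  have hb : 0 < sin α := sin_pos_of_pos_of_lt_pi h0 (by nlinarith [pi_pos])
  have hbne : sin α ≠ 0 := hb.ne'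
  have hc0 : 0 ≤ cos α := cos_nonneg_of_mem_Icc ⟨by linarith [pi_pos], h2⟩
  have hpy : sin α ^ 2 + cos α ^ 2 = 1 := sin_sq_add_cos_sq α
  obtain ⟨htan, hcot2⟩ := trig_ids α h0 h2
  have hcot : cot α = cos α / sin α := Real.cot_eq_cos_div_sin α
  have hXm : ∀ u : ℝ, 0 < u ^ 2 + 1 - 2 * u * cos α := by
    intro u; nlinarith [sq_nonneg (u - cos α), pow_pos hb 2]
  have hXp : ∀ u : ℝ, 0 < u ^ 2 + 1 + 2 * u * cos α := by
    intro u; nlinarith [sq_nonneg (u + cos α), pow_pos hb 2]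
  -- substitution in the first integral (z = (u - cos α)/sin α)
  have T1 : (∫ z in (-cot α)..(tan (α/2)),
        ((z ^ 2 + 1) ^ (-q) + ((z * sin α + cos α) / (z ^ 2 + 1)) ^ q)) =
      (sin α)⁻¹ • ∫ u in (0:ℝ)..1,
        ((((sin α)⁻¹ * u + -(cos α / sin α)) ^ 2 + 1) ^ (-q) +
          ((((sin α)⁻¹ * u + -(cos α / sin α)) * sin α + cos α) /
            (((sin α)⁻¹ * u + -(cos α / sin α)) ^ 2 + 1)) ^ q) := by
    rw [intervalIntegral.integral_comp_mul_add
      (fun z => ((z ^ 2 + 1) ^ (-q) + ((z * sin α + cos α) / (z ^ 2 + 1)) ^ q))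
      (inv_ne_zero hbne) (-(cos α / sin α)), smul_smul, inv_inv,
      inv_mul_cancel₀ hbne, one_smul]
    congr 1
    · rw [hcot]; ring
    · rw [htan]; field_simp; ring
  -- substitution in the second integral (z = (u + cos α)/sin α)
  have T2 : (∫ z in (cot α)..(cot (α/2)),
        ((z ^ 2 + 1) ^ (-q) + ((z * sin α - cos α) / (z ^ 2 + 1)) ^ q)) =
      (sin α)⁻¹ • ∫ u in (0:ℝ)..1,
        ((((sin α)⁻¹ * u + cos α / sin α) ^ 2 + 1) ^ (-q) +
          ((((sin α)⁻¹ * u + cos α / sin α) * sin α - cos α) /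
            (((sin α)⁻¹ * u + cos α / sin α) ^ 2 + 1)) ^ q) := by
    rw [intervalIntegral.integral_comp_mul_add
      (fun z => ((z ^ 2 + 1) ^ (-q) + ((z * sin α - cos α) / (z ^ 2 + 1)) ^ q))
      (inv_ne_zero hbne) (cos α / sin α), smul_smul, inv_inv,
      inv_mul_cancel₀ hbne, one_smul]
    congr 1
    · rw [hcot]; ring
    · rw [hcot2]; field_simp
  -- rewrite the transformed integrands
  have E1 : EqOn (fun u : ℝ =>
        ((((sin α)⁻¹ * u + -(cos α / sin α)) ^ 2 + 1) ^ (-q) +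
          ((((sin α)⁻¹ * u + -(cos α / sin α)) * sin α + cos α) /
            (((sin α)⁻¹ * u + -(cos α / sin α)) ^ 2 + 1)) ^ q))
      (fun u : ℝ => sin α ^ (2*q) * ((u ^ q + 1) * (u ^ 2 + 1 - 2 * u * cos α) ^ (-q)))
      (uIcc (0:ℝ) 1) := by
    intro u hu
    rw [uIcc_of_le (by norm_num : (0:ℝ) ≤ 1)] at hu
    have hz1 : ((sin α)⁻¹ * u + -(cos α / sin α)) ^ 2 + 1
        = (u ^ 2 + 1 - 2 * u * cos α) / (sin α) ^ 2 := by
      field_simp; nlinarith [hpy]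
    have hz2 : ((sin α)⁻¹ * u + -(cos α / sin α)) * sin α + cos α = u := by
      field_simp; ring
    simp only [hz1, hz2]
    rw [rpow_aux _ _ _ hb (hXm u).le, rpow_aux2 _ _ _ _ hb (hXm u) hu.1]
    ring
  have E2 : EqOn (fun u : ℝ =>
        ((((sin α)⁻¹ * u + cos α / sin α) ^ 2 + 1) ^ (-q) +
          ((((sin α)⁻¹ * u + cos α / sin α) * sin α - cos α) /
            (((sin α)⁻¹ * u + cos α / sin α) ^ 2 + 1)) ^ q))
      (fun u : ℝ => sin α ^ (2*q) * ((u ^ q + 1) * (u ^ 2 + 1 + 2 * u * cos α) ^ (-q)))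
      (uIcc (0:ℝ) 1) := by
    intro u hu
    rw [uIcc_of_le (by norm_num : (0:ℝ) ≤ 1)] at hu
    have hz1 : ((sin α)⁻¹ * u + cos α / sin α) ^ 2 + 1
        = (u ^ 2 + 1 + 2 * u * cos α) / (sin α) ^ 2 := by
      field_simp; nlinarith [hpy]
    have hz2 : ((sin α)⁻¹ * u + cos α / sin α) * sin α - cos α = u := by
      field_simp; ring
    simp only [hz1, hz2]
    rw [rpow_aux _ _ _ hb (hXp u).le, rpow_aux2 _ _ _ _ hb (hXp u) hu.1]
    ring
  -- integrability facts
  have cm : Continuous fun u : ℝ => (u ^ q + 1) * (u ^ 2 + 1 - 2 * u * cos α) ^ (-q) := by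
    apply Continuous.mul
    · exact (Continuous.rpow_const continuous_id fun x => Or.inr hq.le).add continuous_const
    · exact Continuous.rpow_const (((continuous_pow 2).add continuous_const).sub ((continuous_const.mul continuous_id).mul continuous_const)) fun x => Or.inl (hXm x).ne'
  have cp : Continuous fun u : ℝ => (u ^ q + 1) * (u ^ 2 + 1 + 2 * u * cos α) ^ (-q) := by
    apply Continuous.mul
    · exact (Continuous.rpow_const continuous_id fun x => Or.inr hq.le).add continuous_const
    · exact Continuous.rpow_const (((continuous_pow 2).add continuous_const).add ((continuous_const.mul continuous_id).mul continuous_const)) fun x => Or.inl (hXp x).ne'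
  -- assemble
  rw [Ffun, T1, T2, intervalIntegral.integral_congr E1, intervalIntegral.integral_congr E2]
  rw [intervalIntegral.integral_const_mul, intervalIntegral.integral_const_mul]
  have split : (∫ u in (0:ℝ)..1,
      sin α ^ q * (u ^ q + 1) *
        ((u ^ 2 + 1 + 2 * u * cos α) ^ (-q) + (u ^ 2 + 1 - 2 * u * cos α) ^ (-q)))
      = sin α ^ q * ((∫ u in (0:ℝ)..1, (u ^ q + 1) * (u ^ 2 + 1 + 2 * u * cos α) ^ (-q))
        + ∫ u in (0:ℝ)..1, (u ^ q + 1) * (u ^ 2 + 1 - 2 * u * cos α) ^ (-q)) := by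
    rw [← intervalIntegral.integral_add (cp.intervalIntegrable 0 1) (cm.intervalIntegrable 0 1),
        ← intervalIntegral.integral_const_mul]
    apply intervalIntegral.integral_congr
    intro u hu
    ring
  rw [split]
  have hpow : sin α ^ (1 - q) * ((sin α)⁻¹ * sin α ^ (2*q)) = sin α ^ q := by
    rw [← Real.rpow_neg_one (sin α), ← Real.rpow_add hb, ← Real.rpow_add hb]
    congr 1; ring
  have : sin α ^ (1-q) * ((sin α)⁻¹ • (sin α ^ (2*q) * (∫ u in (0:ℝ)..1, (u ^ q + 1) * (u ^ 2 + 1 - 2 * u * cos α) ^ (-q))) + (sin α)⁻¹ • (sin α ^ (2*q) * ∫ u in (0:ℝ)..1, (u ^ q + 1) * (u ^ 2 + 1 + 2 * u * cos α) ^ (-q)))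
      = (sin α ^ (1 - q) * ((sin α)⁻¹ * sin α ^ (2*q))) * ((∫ u in (0:ℝ)..1, (u ^ q + 1) * (u ^ 2 + 1 + 2 * u * cos α) ^ (-q))
        + ∫ u in (0:ℝ)..1, (u ^ q + 1) * (u ^ 2 + 1 - 2 * u * cos α) ^ (-q)) := by
    simp only [smul_eq_mul]; ring
  rw [this, hpow]

lemma rpow_aux3 (s X q : ℝ) (hs : 0 < s) (hX : 0 ≤ X) :
    (s ^ 2 * X) ^ (-q) = s ^ (-(2 * q)) * X ^ (-q) := by
  rw [Real.mul_rpow (sq_nonneg s) hX, ← Real.rpow_natCast s 2, ← Real.rpow_mul hs.le,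
      show ((2 : ℕ) : ℝ) * -q = -(2 * q) by push_cast; ring]

set_option maxHeartbeats 1000000 in
lemma inner_eq (q α s : ℝ) (hq : 0 < q) (hα : α ∈ Ioc 0 (π / 2)) (hs : 0 < s) :
    (∫ t in (0:ℝ)..s, (hfun q α s t + hfun q α t s)) = s ^ (1 - q) * Ffun q α := by
  obtain ⟨h0, h2⟩ := id hα
  have hb : 0 < sin α := sin_pos_of_pos_of_lt_pi h0 (by nlinarith [pi_pos])
  have hss : s ^ q * s ^ (-(2 * q)) = s ^ (-q) := by
    rw [← Real.rpow_add hs]; congr 1; ring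
  have key : (∫ u in (0:ℝ)..1, (hfun q α s (s * u) + hfun q α (s * u) s))
      = ∫ u in (0:ℝ)..1, s ^ (-q) *
          (sin α ^ q * (u ^ q + 1) *
            ((u ^ 2 + 1 + 2 * u * cos α) ^ (-q) + (u ^ 2 + 1 - 2 * u * cos α) ^ (-q))) := by
    apply intervalIntegral.integral_congr
    intro u hu
    rw [uIcc_of_le (by norm_num : (0:ℝ) ≤ 1)] at hu
    obtain ⟨hu0, hu1⟩ := hu
    simp only [hfun]
    have e1 : (s * u) ^ 2 + s ^ 2 + 2 * s * (s * u) * cos α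
        = s ^ 2 * (u ^ 2 + 1 + 2 * u * cos α) := by ring
    have e2 : (s * u) ^ 2 + s ^ 2 - 2 * s * (s * u) * cos α
        = s ^ 2 * (u ^ 2 + 1 - 2 * u * cos α) := by ring
    have e3 : s ^ 2 + (s * u) ^ 2 + 2 * (s * u) * s * cos α
        = s ^ 2 * (u ^ 2 + 1 + 2 * u * cos α) := by ring
    have e4 : s ^ 2 + (s * u) ^ 2 - 2 * (s * u) * s * cos α
        = s ^ 2 * (u ^ 2 + 1 - 2 * u * cos α) := by ring
    have hXm : (0:ℝ) ≤ u ^ 2 + 1 - 2 * u * cos α := by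
      nlinarith [sq_nonneg (u - cos α), sin_sq_add_cos_sq α, sq_nonneg (sin α)]
    have hXp : (0:ℝ) ≤ u ^ 2 + 1 + 2 * u * cos α := by
      nlinarith [sq_nonneg (u + cos α), sin_sq_add_cos_sq α, sq_nonneg (sin α)]
    rw [e1, e2, e3, e4, rpow_aux3 _ _ _ hs hXp, rpow_aux3 _ _ _ hs hXm]
    rw [Real.mul_rpow (by positivity) hb.le, Real.mul_rpow hs.le hu0,
        Real.mul_rpow hs.le hb.le]
    rw [← hss]
    ring
  have T := intervalIntegral.integral_comp_mul_left
    (fun t => hfun q α s t + hfun q α t s) hs.ne' (a := 0) (b := 1)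
  simp only [mul_zero, mul_one] at T
  have hT : (∫ t in (0:ℝ)..s, (hfun q α s t + hfun q α t s))
      = s • ∫ u in (0:ℝ)..1, (hfun q α s (s * u) + hfun q α (s * u) s) := by
    rw [T, smul_smul, mul_inv_cancel₀ hs.ne', one_smul]
  rw [hT, key, intervalIntegral.integral_const_mul, ← Ffun_eq q α hq hα, smul_eq_mul,
      ← mul_assoc]
  congr 1
  rw [show (1:ℝ) - q = 1 + -q by ring, Real.rpow_add hs, Real.rpow_one]

lemma region_eq (δ θ : ℝ) (hδ : 0 < δ) :
    (Icc (0:ℝ) θ ×ˢ Icc (0:ℝ) θ \ Icc (0:ℝ) δ ×ˢ Icc (0:ℝ) δ) ∩ {p : ℝ × ℝ | p.2 ≤ p.1}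
      = (Ioc δ θ ×ˢ Icc (0:ℝ) θ) ∩ {p : ℝ × ℝ | p.2 ≤ p.1} := by
  ext ⟨x, y⟩
  simp only [mem_inter_iff, mem_diff, mem_prod, mem_Icc, mem_Ioc, mem_setOf_eq]
  constructor
  · rintro ⟨⟨⟨⟨hx0, hxθ⟩, hy0, hyθ⟩, hn⟩, hyx⟩
    refine ⟨⟨⟨?_, hxθ⟩, hy0, hyθ⟩, hyx⟩
    by_contra h; push_neg at h
    exact hn ⟨⟨hx0, h⟩, hy0, le_trans hyx h⟩
  · rintro ⟨⟨⟨hδx, hxθ⟩, hy0, hyθ⟩, hyx⟩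
    exact ⟨⟨⟨⟨by linarith, hxθ⟩, hy0, hyθ⟩, fun h => absurd h.1.2 (by linarith)⟩, hyx⟩

lemma cont_f (q α : ℝ) (hq : 0 < q) (hc0 : 0 ≤ cos α) (hc1 : cos α < 1) :
    ContinuousOn (fun p : ℝ × ℝ => hfun q α p.1 p.2 + hfun q α p.2 p.1)
      {p : ℝ × ℝ | 0 < p.1 ∧ 0 ≤ p.2} := by
  have hposm : ∀ p : ℝ × ℝ, p ∈ {p : ℝ × ℝ | 0 < p.1 ∧ 0 ≤ p.2} →
      0 < p.2 ^ 2 + p.1 ^ 2 - 2 * p.1 * p.2 * cos α := by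
    rintro ⟨x, y⟩ ⟨hx, hy⟩
    have h1 : 0 ≤ cos α * (x - y) ^ 2 := mul_nonneg hc0 (sq_nonneg _)
    have h2 : 0 < (1 - cos α) * (x * x) := by
      apply mul_pos (by linarith) (mul_pos hx hx)
    have h3 : 0 ≤ (1 - cos α) * (y ^ 2) := mul_nonneg (by linarith) (sq_nonneg _)
    simp only; nlinarith
  have hposp : ∀ p : ℝ × ℝ, p ∈ {p : ℝ × ℝ | 0 < p.1 ∧ 0 ≤ p.2} →
      0 < p.2 ^ 2 + p.1 ^ 2 + 2 * p.1 * p.2 * cos α := by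
    rintro ⟨x, y⟩ ⟨hx, hy⟩
    have h2 : 0 ≤ 2 * x * y * cos α := by positivity
    simp only; nlinarith
  have hposm' : ∀ p : ℝ × ℝ, p ∈ {p : ℝ × ℝ | 0 < p.1 ∧ 0 ≤ p.2} →
      0 < p.1 ^ 2 + p.2 ^ 2 - 2 * p.2 * p.1 * cos α := by
    intro p hp
    have := hposm p hp; nlinarith
  have hposp' : ∀ p : ℝ × ℝ, p ∈ {p : ℝ × ℝ | 0 < p.1 ∧ 0 ≤ p.2} →
      0 < p.1 ^ 2 + p.2 ^ 2 + 2 * p.2 * p.1 * cos α := by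
    intro p hp
    have := hposp p hp; nlinarith
  simp only [hfun]
  apply ContinuousOn.add
  · apply ContinuousOn.mul
    · exact (Continuous.rpow_const (continuous_snd.mul continuous_const)
        fun x => Or.inr hq.le).continuousOn
    · apply ContinuousOn.add
      · apply ContinuousOn.rpow_const
        · exact (((continuous_snd.pow 2).add (continuous_fst.pow 2)).add
            (((continuous_const.mul continuous_fst).mul continuous_snd).mul
              continuous_const)).continuousOn
        · exact fun p hp => Or.inl (hposp p hp).ne'
      · apply ContinuousOn.rpow_const
        · exact (((continuous_snd.pow 2).add (continuous_fst.pow 2)).sub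
            (((continuous_const.mul continuous_fst).mul continuous_snd).mul
              continuous_const)).continuousOn
        · exact fun p hp => Or.inl (hposm p hp).ne'
  · apply ContinuousOn.mul
    · exact (Continuous.rpow_const (continuous_fst.mul continuous_const)
        fun x => Or.inr hq.le).continuousOn
    · apply ContinuousOn.add
      · apply ContinuousOn.rpow_const
        · exact (((continuous_fst.pow 2).add (continuous_snd.pow 2)).add
            (((continuous_const.mul continuous_snd).mul continuous_fst).mul
              continuous_const)).continuousOn
        · exact fun p hp => Or.inl (hposp' p hp).ne'
      · apply ContinuousOn.rpow_const
        · exact (((continuous_fst.pow 2).add (continuous_snd.pow 2)).sub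
            (((continuous_const.mul continuous_snd).mul continuous_fst).mul
              continuous_const)).continuousOn
        · exact fun p hp => Or.inl (hposm' p hp).ne'


set_option maxHeartbeats 1000000 in
theorem stmt8 (q α δ θ : ℝ) (hq : 2 < q) (hα : α ∈ Ioc 0 (π / 2))
    (hδ : 0 < δ) (hδθ : δ < θ) :
    (∫ p in ((Icc (0:ℝ) θ ×ˢ Icc (0:ℝ) θ \ Icc (0:ℝ) δ ×ˢ Icc (0:ℝ) δ) ∩
        {p : ℝ × ℝ | p.2 ≤ p.1}), (hfun q α p.1 p.2 + hfun q α p.2 p.1)) =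
      (∫ s in δ..θ, s ^ (1 - q) * Ffun q α) ∧
    (∫ p in ((Icc (0:ℝ) θ ×ˢ Icc (0:ℝ) θ \ Icc (0:ℝ) δ ×ˢ Icc (0:ℝ) δ) ∩
        {p : ℝ × ℝ | p.2 ≤ p.1}), (hfun q α p.1 p.2 + hfun q α p.2 p.1)) =
      Ffun q α * (δ ^ (2 - q) - θ ^ (2 - q)) / (q - 2) := by
  have hq0 : 0 < q := by linarith
  obtain ⟨h0, h2⟩ := id hα
  have hb : 0 < sin α := sin_pos_of_pos_of_lt_pi h0 (by nlinarith [pi_pos])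
  have hc0 : 0 ≤ cos α := cos_nonneg_of_mem_Icc ⟨by linarith [pi_pos], h2⟩
  have hc1 : cos α < 1 := by nlinarith [sin_sq_add_cos_sq α, mul_pos hb hb]
  have hB : MeasurableSet {p : ℝ × ℝ | p.2 ≤ p.1} :=
    measurableSet_le measurable_snd measurable_fst
  have hIntS : IntegrableOn (fun p : ℝ × ℝ => hfun q α p.1 p.2 + hfun q α p.2 p.1)
      (Icc δ θ ×ˢ Icc (0:ℝ) θ) := by
    apply ContinuousOn.integrableOn_compact (isCompact_Icc.prod isCompact_Icc)
    apply (cont_f q α hq0 hc0 hc1).mono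
    rintro ⟨x, y⟩ ⟨⟨hx, _⟩, ⟨hy, _⟩⟩
    exact ⟨by simpa using lt_of_lt_of_le hδ hx, hy⟩
  have main : (∫ p in ((Icc (0:ℝ) θ ×ˢ Icc (0:ℝ) θ \ Icc (0:ℝ) δ ×ˢ Icc (0:ℝ) δ) ∩
        {p : ℝ × ℝ | p.2 ≤ p.1}), (hfun q α p.1 p.2 + hfun q α p.2 p.1)) =
      (∫ s in δ..θ, s ^ (1 - q) * Ffun q α) := by
    rw [region_eq δ θ hδ, ← setIntegral_indicator hB]
    have hint : IntegrableOn
        ({p : ℝ × ℝ | p.2 ≤ p.1}.indicator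
          (fun p : ℝ × ℝ => hfun q α p.1 p.2 + hfun q α p.2 p.1))
        (Ioc δ θ ×ˢ Icc (0:ℝ) θ) := by
      rw [IntegrableOn, integrable_indicator_iff hB, IntegrableOn,
        Measure.restrict_restrict hB]
      apply hIntS.mono_set
      rintro ⟨x, y⟩ ⟨-, ⟨hx, hy⟩⟩
      exact ⟨⟨le_of_lt hx.1, hx.2⟩, hy⟩
    rw [Measure.volume_eq_prod] at hint ⊢
    rw [setIntegral_prod _ hint]
    have congr1 : ∀ x ∈ Ioc δ θ,
        (∫ y in Icc (0:ℝ) θ, {p : ℝ × ℝ | p.2 ≤ p.1}.indicator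
          (fun p : ℝ × ℝ => hfun q α p.1 p.2 + hfun q α p.2 p.1) (x, y))
          = x ^ (1 - q) * Ffun q α := by
      intro x hx
      have hfn : (fun y => {p : ℝ × ℝ | p.2 ≤ p.1}.indicator
          (fun p : ℝ × ℝ => hfun q α p.1 p.2 + hfun q α p.2 p.1) (x, y))
          = (Iic x).indicator (fun y => hfun q α x y + hfun q α y x) := by
        ext y
        by_cases h : y ≤ x <;>
          simp [Set.indicator_apply, h]
      have hset : Icc (0:ℝ) θ ∩ Iic x = Icc 0 x := by
        ext y; simp only [mem_inter_iff, mem_Icc, mem_Iic]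
        constructor
        · rintro ⟨⟨h1, _⟩, h3⟩; exact ⟨h1, h3⟩
        · rintro ⟨h1, h3⟩; exact ⟨⟨h1, le_trans h3 hx.2⟩, h3⟩
      rw [hfn, setIntegral_indicator measurableSet_Iic, hset,
        integral_Icc_eq_integral_Ioc,
        ← intervalIntegral.integral_of_le (by linarith [hx.1] : (0:ℝ) ≤ x)]
      exact inner_eq q α x hq0 hα (lt_trans hδ hx.1)
    rw [setIntegral_congr_fun measurableSet_Ioc congr1,
      ← intervalIntegral.integral_of_le hδθ.le]
  refine ⟨main, main.trans ?_⟩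
  have hne : q - 2 ≠ 0 := by intro h; linarith
  rw [intervalIntegral.integral_mul_const,
    integral_rpow (Or.inr ⟨by intro h; linarith, by
      rw [uIcc_of_le hδθ.le]; rintro ⟨h, -⟩; linarith⟩),
    show (1:ℝ) - q + 1 = 2 - q by ring]
  have hne2 : (2:ℝ) - q ≠ 0 := by intro h; linarith
  field_simp
  ring
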